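/- Let ℓ be an odd prime and n ≥ 1. Suppose A and B are 2×2 matrices over ℤ/ℓ^{n+2}ℤ of the forms [[1 + ℓ^n·a, ℓ^{n+1}·j], [ℓ^n·b, 1 + ℓ^{n+1}·k]] and [[1 + ℓ^n·x, ℓ^{n+1}·z], [ℓ^n·y, 1 + ℓ^{n+1}·w]] respectively. If (B^ℓ)^{-1}·A^ℓ is upper triangular with upper-left entry 1 (i.e., of the form [[1, c], [0, d]]), then a ≡ x (mod ℓ) and b ≡ y (mod ℓ). -/

import Mathlib

open Matrix Finset in
theorem pow_key (ℓ n : ℕ) (hℓ : ℓ.Prime) (h3 : 3 ≤ ℓ) (hn : 1 ≤ n) (a b j k : ℤ) :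
    ((!![1 + (ℓ : ℤ) ^ n * a, (ℓ : ℤ) ^ (n + 1) * j;
         (ℓ : ℤ) ^ n * b, 1 + (ℓ : ℤ) ^ (n + 1) * k]).map
        (Int.cast : ℤ → ZMod (ℓ ^ (n + 2)))) ^ ℓ =
    (!![1 + (ℓ : ℤ) ^ (n + 1) * a, 0;
        (ℓ : ℤ) ^ (n + 1) * b, 1]).map (Int.cast : ℤ → ZMod (ℓ ^ (n + 2))) := by
  have hNZ : NeZero (ℓ ^ (n + 2)) := ⟨pow_ne_zero _ hℓ.ne_zero⟩
  set R := ZMod (ℓ ^ (n + 2)) with hR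
  have hℓR2 : (ℓ : R) ^ (n + 2) = 0 := by
    have := ZMod.natCast_self (ℓ ^ (n + 2))
    push_cast at this
    exact this
  set M : Matrix (Fin 2) (Fin 2) R := !![(a : R), (ℓ : R) * j; (b : R), (ℓ : R) * k] with hM
  set c : R := (ℓ : R) ^ n with hc
  have hA : (!![1 + (ℓ : ℤ) ^ n * a, (ℓ : ℤ) ^ (n + 1) * j;
         (ℓ : ℤ) ^ n * b, 1 + (ℓ : ℤ) ^ (n + 1) * k]).map
        (Int.cast : ℤ → ZMod (ℓ ^ (n + 2))) = c • M + 1 := by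
    ext i j'
    fin_cases i <;> fin_cases j' <;>
      simp [hM, hc, Matrix.one_apply] <;> push_cast <;> ring
  rw [hA, (Commute.one_right (c • M)).add_pow]
  have hzero : ∀ m ∈ range (ℓ + 1), m ∉ ({0, 1} : Finset ℕ) →
      (c • M) ^ m * (1 : Matrix (Fin 2) (Fin 2) R) ^ (ℓ - m) * (ℓ.choose m : Matrix (Fin 2) (Fin 2) R) = 0 := by
    intro m hm hm2
    simp only [mem_range] at hm
    simp only [mem_insert, mem_singleton] at hm2
    push_neg at hm2
    have h2m : 2 ≤ m := by omega
    have hdvd : ℓ ^ (n + 2) ∣ ℓ ^ (n * m) * ℓ.choose m := by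
      rcases eq_or_lt_of_le (by omega : m ≤ ℓ) with h | h
      · rw [h, Nat.choose_self, mul_one]
        exact pow_dvd_pow ℓ (by nlinarith)
      · have hc1 : ℓ ∣ ℓ.choose m := hℓ.dvd_choose_self (by omega) h
        have h2 : ℓ ^ (n + 1) * ℓ ∣ ℓ ^ (n * m) * ℓ.choose m :=
          mul_dvd_mul (pow_dvd_pow ℓ (by nlinarith)) hc1
        calc ℓ ^ (n + 2) = ℓ ^ (n + 1) * ℓ := by ring
          _ ∣ _ := h2
    have hcoef : c ^ m * (ℓ.choose m : R) = 0 := by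
      have : ((ℓ ^ (n * m) * ℓ.choose m : ℕ) : R) = 0 :=
        (ZMod.natCast_eq_zero_iff _ _).mpr hdvd
      push_cast at this
      rw [hc, ← pow_mul]
      rwa [Nat.cast_mul, Nat.cast_pow] at this
    have hcast : (ℓ.choose m : Matrix (Fin 2) (Fin 2) R) = (ℓ.choose m : R) • 1 := by
      rw [Nat.cast_smul_eq_nsmul, nsmul_eq_mul, mul_one]
    rw [smul_pow, one_pow, mul_one, hcast, mul_smul_comm, mul_one, smul_smul,
      mul_comm ((ℓ.choose m : R)) (c ^ m), hcoef, zero_smul]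
  have hsub : ({0, 1} : Finset ℕ) ⊆ range (ℓ + 1) := by
    intro i hi
    simp only [mem_insert, mem_singleton] at hi
    simp only [mem_range]
    omega
  rw [← Finset.sum_subset hsub hzero, Finset.sum_pair (by norm_num : (0 : ℕ) ≠ 1)]
  ext i j'
  fin_cases i <;> fin_cases j' <;>
    simp [hM, hc, Matrix.one_apply, Matrix.add_apply, Matrix.mul_apply, Fin.sum_univ_two, Matrix.natCast_apply] <;>
    push_cast
  · ring
  · linear_combination (j : R) * hℓR2
  · ring
  · linear_combination (k : R) * hℓR2

theorem stmt_2 (ℓ n : ℕ) (hℓ : ℓ.Prime) (hodd : Odd ℓ) (hn : 1 ≤ n)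
    (a b j k x y z w : ℤ)
    (A B : Matrix (Fin 2) (Fin 2) (ZMod (ℓ ^ (n + 2))))
    (hA : A = (!![1 + (ℓ : ℤ) ^ n * a, (ℓ : ℤ) ^ (n + 1) * j;
                  (ℓ : ℤ) ^ n * b, 1 + (ℓ : ℤ) ^ (n + 1) * k]).map
        (Int.cast : ℤ → ZMod (ℓ ^ (n + 2))))
    (hB : B = (!![1 + (ℓ : ℤ) ^ n * x, (ℓ : ℤ) ^ (n + 1) * z;
                  (ℓ : ℤ) ^ n * y, 1 + (ℓ : ℤ) ^ (n + 1) * w]).map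
        (Int.cast : ℤ → ZMod (ℓ ^ (n + 2))))
    (hAu : IsUnit A.det) (hBu : IsUnit B.det)
    (hup : ∃ c d : ZMod (ℓ ^ (n + 2)), (B ^ ℓ)⁻¹ * A ^ ℓ = !![1, c; 0, d]) :
    a ≡ x [ZMOD (ℓ : ℤ)] ∧ b ≡ y [ZMOD (ℓ : ℤ)] := by
  have h3 : 3 ≤ ℓ := by
    rcases hodd with ⟨t, ht⟩
    have := hℓ.two_le
    omega
  have hNZ : NeZero (ℓ ^ (n + 2)) := ⟨pow_ne_zero _ hℓ.ne_zero⟩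
  have hApow : A ^ ℓ = (!![1 + (ℓ:ℤ)^(n+1)*a, 0; (ℓ:ℤ)^(n+1)*b, 1]).map
      (Int.cast : ℤ → ZMod (ℓ ^ (n + 2))) := by
    rw [hA]; exact pow_key ℓ n hℓ h3 hn a b j k
  have hBpow : B ^ ℓ = (!![1 + (ℓ:ℤ)^(n+1)*x, 0; (ℓ:ℤ)^(n+1)*y, 1]).map
      (Int.cast : ℤ → ZMod (ℓ ^ (n + 2))) := by
    rw [hB]; exact pow_key ℓ n hℓ h3 hn x y z w
  obtain ⟨c, d, hcd⟩ := hup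
  have hBu' : IsUnit (B ^ ℓ).det := by rw [Matrix.det_pow]; exact hBu.pow ℓ
  have hmain : A ^ ℓ = B ^ ℓ * !![1, c; 0, d] := by
    rw [← hcd, ← mul_assoc, Matrix.mul_nonsing_inv _ hBu', one_mul]
  rw [hApow, hBpow] at hmain
  have h00 := congrArg (fun m => m 0 0) hmain
  have h10 := congrArg (fun m => m 1 0) hmain
  simp [Matrix.mul_apply, Fin.sum_univ_two] at h00 h10
  have key : ∀ u v : ℤ,
      (((ℓ:ℤ)^(n+1) * u : ℤ) : ZMod (ℓ ^ (n + 2))) = (((ℓ:ℤ)^(n+1) * v : ℤ) : ZMod (ℓ ^ (n + 2))) →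
      u ≡ v [ZMOD (ℓ : ℤ)] := by
    intro u v huv
    have h0 : (((ℓ:ℤ)^(n+1) * (u - v) : ℤ) : ZMod (ℓ ^ (n + 2))) = 0 := by
      push_cast at huv ⊢
      rw [mul_sub]
      rw [huv]
      ring
    rw [ZMod.intCast_zmod_eq_zero_iff_dvd] at h0
    have hdvd : (ℓ:ℤ)^(n+1) * (ℓ:ℤ) ∣ (ℓ:ℤ)^(n+1) * (u - v) := by
      calc (ℓ:ℤ)^(n+1) * (ℓ:ℤ) = ((ℓ ^ (n+2) : ℕ) : ℤ) := by push_cast; ring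
        _ ∣ _ := h0
    have hℓ0 : ((ℓ:ℤ))^(n+1) ≠ 0 := pow_ne_zero _ (by exact_mod_cast hℓ.ne_zero)
    have : (ℓ:ℤ) ∣ u - v := (mul_dvd_mul_iff_left hℓ0).mp hdvd
    exact (Int.modEq_iff_dvd.mpr this).symm
  constructor
  · apply key
    push_cast at h00 ⊢
    linear_combination h00
  · apply key
    push_cast at h10 ⊢
    linear_combination h10
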